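/- Let (X, Π) be a weighted pure d-dimensional simplicial complex. For every integer k with 1 ≤ k ≤ d, the second eigenvalues of the k-th down-up walk and the (k−1)-th up-down walk coincide and satisfy λ₂(P∨_k) = λ₂(P∧_{k−1}) ≤ 1 − (1/(k+1)) · ∏_{j=−1}^{k−2} (1 − γ_j). -/

import Mathlib

open Finset

/-- A weighted pure `d`-dimensional simplicial complex on a finite ground set `V`.
Faces are finsets; a face of cardinality `m` has dimension `m - 1` (so `X(j)` is the
set of faces of cardinality `j + 1`).  The family of faces is downward closed, every
face is contained in a face of cardinality `d + 1` (purity), and a probability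
distribution `Π = Π_d` (positive weights summing to `1`) is given on the
top-dimensional faces. -/
structure WSC (V : Type*) [DecidableEq V] [Fintype V] (d : ℕ) where
  faces : Finset (Finset V)
  empty_mem : ∅ ∈ faces
  down_closed : ∀ β ∈ faces, ∀ α ⊆ β, α ∈ faces
  pure : ∀ α ∈ faces, ∃ β ∈ faces, α ⊆ β ∧ β.card = d + 1
  dim_le : ∀ α ∈ faces, α.card ≤ d + 1
  weight : Finset V → ℝ
  weight_pos : ∀ β ∈ faces, β.card = d + 1 → 0 < weight β
  weight_zero : ∀ β : Finset V, β ∉ faces ∨ β.card ≠ d + 1 → weight β = 0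
  weight_sum : ∑ β ∈ faces.filter (fun β => β.card = d + 1), weight β = 1

namespace WSC

variable {V : Type*} [DecidableEq V] [Fintype V] {d : ℕ}

/-- Auxiliary recursion for the marginal distributions: `Waux X t` is the marginal
distribution `Π_{d - t}` on faces of cardinality `d + 1 - t`, defined by
`Π_j(α) = (1/(j+2)) ∑_{β ∈ X(j+1), β ⊇ α} Π_{j+1}(β)`. -/
noncomputable def Waux (X : WSC V d) : ℕ → Finset V → ℝ
  | 0 => X.weight
  | (t + 1) => fun α =>
      (1 / ((d + 1 - t : ℕ) : ℝ)) *
        ∑ β ∈ X.faces.filter (fun β => α ⊆ β ∧ β.card = d + 1 - t), X.Waux t β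

/-- `X.W m α` is the marginal probability `Π_{m-1}(α)` of the face `α` of cardinality
`m` (dimension `m - 1`). -/
noncomputable def W (X : WSC V d) (m : ℕ) : Finset V → ℝ := X.Waux (d + 1 - m)

/-- The inner product `⟨f, g⟩_{Π_{m-1}}` on `ℝ^{X(m-1)}` (faces of cardinality `m`). -/
noncomputable def inn (X : WSC V d) (m : ℕ) (f g : Finset V → ℝ) : ℝ :=
  ∑ α ∈ X.faces.filter (fun α => α.card = m), X.W m α * f α * g α

/-- The up operator `U_j`: `(U_j f)(β) = (1/(j+2)) ∑_{x ∈ β} f(β \ {x})`, for `β` of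
cardinality `j + 2`.  (The formula is uniform in the cardinality of `β`.) -/
noncomputable def upOp (f : Finset V → ℝ) : Finset V → ℝ :=
  fun β => (1 / (β.card : ℝ)) * ∑ x ∈ β, f (β.erase x)

/-- The down operator `D_{j+1}`:
`(D_{j+1} g)(α) = ∑_{β ∈ X(j+1), β ⊇ α} Π_{j+1}(β) g(β) / ((j+2) Π_j(α))`, for `α` of
cardinality `j + 1`.  (The formula is uniform in the cardinality of `α`.) -/
noncomputable def downOp (X : WSC V d) (g : Finset V → ℝ) : Finset V → ℝ :=
  fun α => ∑ β ∈ X.faces.filter (fun β => α ⊆ β ∧ β.card = α.card + 1),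
      (X.W (α.card + 1) β * g β) / (((α.card : ℝ) + 1) * X.W α.card α)

/-- The down-up walk `P∨_k = U_{k-1} D_k`, acting on functions on `X(k)` (faces of
cardinality `k + 1`). -/
noncomputable def downUp (X : WSC V d) (f : Finset V → ℝ) : Finset V → ℝ :=
  upOp (X.downOp f)

/-- The up-down walk `P∧_k = D_{k+1} U_k`, acting on functions on `X(k)` (faces of
cardinality `k + 1`). -/
noncomputable def upDown (X : WSC V d) (f : Finset V → ℝ) : Finset V → ℝ :=
  X.downOp (upOp f)

/-- The `k`-th non-lazy up-down walk `N_k = ((k+2)/(k+1)) (P∧_k - (1/(k+2)) I)`. -/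
noncomputable def nonLazy (X : WSC V d) (k : ℕ) (f : Finset V → ℝ) : Finset V → ℝ :=
  fun α => (((k : ℝ) + 2) / ((k : ℝ) + 1)) * (X.upDown f α - (1 / ((k : ℝ) + 2)) * f α)

/-- The up-down walk `U_{a,b} = D_{a+1} ⋯ D_b · U_{b-1} ⋯ U_a` on `X(a)` through
`X(b)`, where `t = b - a`. -/
noncomputable def upDownAB (X : WSC V d) (t : ℕ) (f : Finset V → ℝ) : Finset V → ℝ :=
  (X.downOp)^[t] (upOp^[t] f)

/-- The second largest eigenvalue of a row-stochastic operator `M` on `ℝ^{X(m-1)}`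
(faces of cardinality `m`) which is self-adjoint with respect to `⟨·,·⟩_{Π_{m-1}}`
and has stationary distribution `Π_{m-1}`: by the variational principle it is the
supremum of the Rayleigh quotients of (nonzero) functions orthogonal to the
constant function `1`. -/
noncomputable def lam2 (X : WSC V d) (m : ℕ) (M : (Finset V → ℝ) → Finset V → ℝ) : ℝ :=
  sSup { r : ℝ | ∃ f : Finset V → ℝ,
    X.inn m f (fun _ => 1) = 0 ∧ X.inn m f f ≠ 0 ∧
    r = X.inn m f (M f) / X.inn m f f }

/-- The vertices of the link `X_α`: those `x ∉ α` with `α ∪ {x} ∈ X`. -/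
def linkVerts (X : WSC V d) (α : Finset V) : Finset V :=
  Finset.univ.filter (fun x => x ∉ α ∧ insert x α ∈ X.faces)

/-- The link distribution `Π^α_l(τ) = Π_{j+1+l}(α ∪ τ) / (C(|α ∪ τ|, |α|) · Π_j(α))`
for a face `α` of dimension `j` and `τ ∈ X_α(l)`. -/
noncomputable def linkPi (X : WSC V d) (α τ : Finset V) : ℝ :=
  X.W (α ∪ τ).card (α ∪ τ) / ((Nat.choose (α ∪ τ).card α.card : ℝ) * X.W α.card α)

/-- The random walk matrix `M_α` of the graph of the link `X_α`, with entries
`M_α(x, y) = Π^α_1({x, y}) / (2 Π^α_0(x))` for `{x, y} ∈ X_α(1)` and `0` otherwise,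
viewed as an operator on functions on the vertices of the link. -/
noncomputable def linkWalk (X : WSC V d) (α : Finset V) (f : V → ℝ) : V → ℝ :=
  fun x => ∑ y ∈ (X.linkVerts α).filter
      (fun y => y ≠ x ∧ insert y (insert x α) ∈ X.faces),
    (X.linkPi α {x, y} / (2 * X.linkPi α {x})) * f y

/-- The projector `J_α` onto the constant functions on the link: `J_α g` is the
constant function with value `E_{x ∼ Π^α_0}[g(x)]`. -/
noncomputable def linkJ (X : WSC V d) (α : Finset V) (g : V → ℝ) : V → ℝ :=
  fun _ => ∑ x ∈ X.linkVerts α, X.linkPi α {x} * g x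

/-- The inner product `⟨g, h⟩_{Π^α_0}` on functions on the vertices of the link. -/
noncomputable def linkInner (X : WSC V d) (α : Finset V) (g h : V → ℝ) : ℝ :=
  ∑ x ∈ X.linkVerts α, X.linkPi α {x} * g x * h x

/-- The second largest eigenvalue `λ₂(M_α)` of the random walk matrix of the graph
of the link `X_α`, via the variational principle. -/
noncomputable def linkLam2 (X : WSC V d) (α : Finset V) : ℝ :=
  sSup { r : ℝ | ∃ f : V → ℝ,
    X.linkInner α f (fun _ => 1) = 0 ∧ X.linkInner α f f ≠ 0 ∧
    r = X.linkInner α f (X.linkWalk α f) / X.linkInner α f f }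

/-- `X.gammaC m` is `γ_{m-1} = max_{α ∈ X(m-1)} λ₂(M_α)`, the maximum over faces `α`
of cardinality `m` (dimension `m - 1`) of the second eigenvalue of the link walk. -/
noncomputable def gammaC (X : WSC V d) (m : ℕ) : ℝ :=
  sSup { r : ℝ | ∃ α ∈ X.faces, α.card = m ∧ r = X.linkLam2 α }

end WSC
namespace WSC

variable {V : Type*} [DecidableEq V] [Fintype V] {d : ℕ} (X : WSC V d)

lemma weight_nonneg (β : Finset V) : 0 ≤ X.weight β := by
  by_cases h : β ∈ X.faces ∧ β.card = d + 1
  · exact le_of_lt (X.weight_pos β h.1 h.2)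
  · rw [X.weight_zero β (by tauto)]

lemma Waux_nonneg (t : ℕ) (β : Finset V) : 0 ≤ X.Waux t β := by
  induction t generalizing β with
  | zero => exact X.weight_nonneg β
  | succ t ih =>
    rw [Waux]
    apply mul_nonneg (by positivity)
    exact Finset.sum_nonneg fun γ _ => ih γ

lemma W_nonneg (m : ℕ) (β : Finset V) : 0 ≤ X.W m β := X.Waux_nonneg _ β

lemma W_rec (m : ℕ) (hm : m ≤ d) (α : Finset V) :
    X.W m α = (1 / ((m : ℝ) + 1)) *
      ∑ β ∈ X.faces.filter (fun β => α ⊆ β ∧ β.card = m + 1), X.W (m + 1) β := by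
  have h1 : d + 1 - m = (d - m) + 1 := by omega
  have h2 : d + 1 - (d - m) = m + 1 := by omega
  have h3 : d + 1 - (m + 1) = d - m := by omega
  show X.Waux (d + 1 - m) α = _
  rw [h1, Waux, h2, W, h3]
  push_cast
  ring

lemma sum_ext_W (m : ℕ) (hm : m ≤ d) (α : Finset V) :
    ∑ β ∈ X.faces.filter (fun β => α ⊆ β ∧ β.card = m + 1), X.W (m + 1) β
      = ((m : ℝ) + 1) * X.W m α := by
  rw [X.W_rec m hm α]
  have : ((m : ℝ) + 1) ≠ 0 := by positivity
  field_simp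

lemma W_pos (m : ℕ) (hm : m ≤ d + 1) (α : Finset V) (hα : α ∈ X.faces)
    (hc : α.card = m) : 0 < X.W m α := by
  have key : ∀ t : ℕ, t ≤ d + 1 → ∀ α ∈ X.faces, α.card = d + 1 - t → 0 < X.Waux t α := by
    intro t
    induction t with
    | zero =>
      intro _ α hα hc
      exact X.weight_pos α hα (by omega)
    | succ t ih =>
      intro ht α hα hc
      rw [Waux]
      have hpos : (0:ℝ) < ((d + 1 - t : ℕ) : ℝ) := by
        have : 0 < d + 1 - t := by omega
        exact_mod_cast this
      apply mul_pos (by positivity)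
      obtain ⟨B, hB, hαB, hBc⟩ := X.pure α hα
      obtain ⟨u, hu1, hu2, hu3⟩ := Finset.exists_subsuperset_card_eq hαB (n := d + 1 - t)
        (by omega) (by omega)
      have hu3' : u.card = d + 1 - t := by omega
      have huf : u ∈ X.faces := X.down_closed B hB u hu2
      apply Finset.sum_pos' (fun γ _ => X.Waux_nonneg t γ)
      exact ⟨u, Finset.mem_filter.mpr ⟨huf, hu1, hu3'⟩, ih (by omega) u huf hu3'⟩
  exact key (d + 1 - m) (by omega) α hα (by omega)

lemma inn_self_nonneg (m : ℕ) (f : Finset V → ℝ) : 0 ≤ X.inn m f f :=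
  Finset.sum_nonneg fun α _ => by
    have := X.W_nonneg m α
    have : X.W m α * f α * f α = X.W m α * (f α)^2 := by ring
    rw [this]; positivity

lemma inn_comm (m : ℕ) (f g : Finset V → ℝ) : X.inn m f g = X.inn m g f :=
  Finset.sum_congr rfl fun α _ => by ring

lemma inn_sq_le (m : ℕ) (f g : Finset V → ℝ) :
    (X.inn m f g)^2 ≤ X.inn m f f * X.inn m g g := by
  have h1 : X.inn m f g = ∑ α ∈ X.faces.filter (fun α => α.card = m),
      (Real.sqrt (X.W m α) * f α) * (Real.sqrt (X.W m α) * g α) := by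
    refine Finset.sum_congr rfl fun α _ => ?_
    rw [show (Real.sqrt (X.W m α) * f α) * (Real.sqrt (X.W m α) * g α)
        = (Real.sqrt (X.W m α) * Real.sqrt (X.W m α)) * f α * g α by ring,
      Real.mul_self_sqrt (X.W_nonneg m α)]
  have h2 : X.inn m f f = ∑ α ∈ X.faces.filter (fun α => α.card = m),
      (Real.sqrt (X.W m α) * f α)^2 := by
    refine Finset.sum_congr rfl fun α _ => ?_
    rw [mul_pow, Real.sq_sqrt (X.W_nonneg m α)]; ring
  have h3 : X.inn m g g = ∑ α ∈ X.faces.filter (fun α => α.card = m),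
      (Real.sqrt (X.W m α) * g α)^2 := by
    refine Finset.sum_congr rfl fun α _ => ?_
    rw [mul_pow, Real.sq_sqrt (X.W_nonneg m α)]; ring
  rw [h1, h2, h3]
  exact Finset.sum_mul_sq_le_sq_mul_sq _ _ _

/-- The fundamental exchange lemma. -/
lemma exch (m : ℕ) (G : Finset V → Finset V → ℝ) :
    ∑ β ∈ X.faces.filter (fun β => β.card = m + 1), ∑ x ∈ β, G (β.erase x) β
    = ∑ α ∈ X.faces.filter (fun α => α.card = m),
        ∑ β ∈ X.faces.filter (fun β => α ⊆ β ∧ β.card = m + 1), G α β := by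
  rw [Finset.sum_sigma', Finset.sum_sigma']
  refine Finset.sum_bij (fun p _ => (⟨p.1.erase p.2, p.1⟩ :
    (_ : Finset V) × Finset V)) ?_ ?_ ?_ ?_
  · rintro ⟨β, x⟩ hp
    simp only [Finset.mem_sigma, Finset.mem_filter] at hp ⊢
    obtain ⟨⟨hβf, hβc⟩, hx⟩ := hp
    refine ⟨⟨X.down_closed β hβf _ (Finset.erase_subset _ _), ?_⟩,
      hβf, Finset.erase_subset _ _, hβc⟩
    rw [Finset.card_erase_of_mem hx, hβc]
    omega
  · rintro ⟨β, x⟩ h1 ⟨β', x'⟩ h2 heq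
    simp only [Finset.mem_sigma, Finset.mem_filter] at h1 h2
    have hβ : β = β' := congrArg (fun p => p.2) heq
    subst hβ
    have he : β.erase x = β.erase x' := congrArg (fun p => p.1) heq
    have hx : x = x' := by
      by_contra hne
      have : x' ∈ β.erase x := Finset.mem_erase.mpr ⟨fun h => hne h.symm, h2.2⟩
      rw [he] at this
      exact (Finset.notMem_erase x' β) this
    rw [hx]
  · rintro ⟨α, β⟩ hb
    simp only [Finset.mem_sigma, Finset.mem_filter] at hb
    obtain ⟨⟨hαf, hαc⟩, hβf, hαβ, hβc⟩ := hb
    have hne : (β \ α).Nonempty := by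
      rw [← Finset.card_pos, Finset.card_sdiff_of_subset hαβ, hβc, hαc]; omega
    obtain ⟨x, hx⟩ := hne
    rw [Finset.mem_sdiff] at hx
    refine ⟨⟨β, x⟩, ?_, ?_⟩
    · exact Finset.mem_sigma.mpr ⟨Finset.mem_filter.mpr ⟨hβf, hβc⟩, hx.1⟩
    · have : β.erase x = α := by
        refine (Finset.eq_of_subset_of_card_le
          (Finset.subset_erase.mpr ⟨hαβ, hx.2⟩) ?_).symm
        rw [Finset.card_erase_of_mem hx.1, hβc, hαc]
        omega
      simp [this]
  · rintro ⟨β, x⟩ _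
    rfl

/-- The extension lemma : summing over faces extending `σ` by one element. -/
lemma extend (σ : Finset V) (hσ : σ ∈ X.faces) (m : ℕ) (hm : σ.card = m)
    (G : Finset V → ℝ) :
    ∑ β ∈ X.faces.filter (fun β => σ ⊆ β ∧ β.card = m + 1), G β
    = ∑ y ∈ X.linkVerts σ, G (insert y σ) := by
  refine (Finset.sum_bij (fun y _ => insert y σ) ?_ ?_ ?_ ?_).symm
  · intro y hy
    simp only [linkVerts, Finset.mem_filter, Finset.mem_univ, true_and] at hy
    exact Finset.mem_filter.mpr ⟨hy.2, Finset.subset_insert _ _,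
      by rw [Finset.card_insert_of_notMem hy.1, hm]⟩
  · intro y hy y' hy' heq
    simp only [linkVerts, Finset.mem_filter, Finset.mem_univ, true_and] at hy hy'
    have heq' : insert y σ = insert y' σ := heq
    have : y ∈ insert y' σ := by
      rw [← heq']; exact Finset.mem_insert_self y σ
    rcases Finset.mem_insert.mp this with h | h
    · exact h
    · exact absurd h hy.1
  · intro β hβ
    simp only [Finset.mem_filter] at hβ
    obtain ⟨hβf, hσβ, hβc⟩ := hβ
    have hne : (β \ σ).Nonempty := by
      rw [← Finset.card_pos, Finset.card_sdiff_of_subset hσβ, hβc, hm]; omega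
    obtain ⟨y, hy⟩ := hne
    rw [Finset.mem_sdiff] at hy
    have hins : insert y σ = β := by
      refine Finset.eq_of_subset_of_card_le (Finset.insert_subset hy.1 hσβ) ?_
      rw [Finset.card_insert_of_notMem hy.2, hβc, hm]
    refine ⟨y, ?_, hins⟩
    simp only [linkVerts, Finset.mem_filter, Finset.mem_univ, true_and]
    exact ⟨hy.2, hins ▸ hβf⟩
  · intro y hy
    rfl

lemma adjoint (m : ℕ) (hm : m ≤ d) (g h : Finset V → ℝ) :
    X.inn m g (X.downOp h) = X.inn (m + 1) (upOp g) h := by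
  have hm1 : ((m : ℝ) + 1) ≠ 0 := by positivity
  have lhs : X.inn m g (X.downOp h) = ∑ α ∈ X.faces.filter (fun α => α.card = m),
      ∑ β ∈ X.faces.filter (fun β => α ⊆ β ∧ β.card = m + 1),
        (1 / ((m : ℝ) + 1)) * (X.W (m + 1) β * (g α * h β)) := by
    refine Finset.sum_congr rfl fun α hα => ?_
    rw [Finset.mem_filter] at hα
    obtain ⟨hαf, hαc⟩ := hα
    have hW : X.W m α ≠ 0 := ne_of_gt (X.W_pos m (by omega) α hαf hαc)
    have hD : X.downOp h α = ∑ β ∈ X.faces.filter (fun β => α ⊆ β ∧ β.card = m + 1),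
        (X.W (m + 1) β * h β) / (((m : ℝ) + 1) * X.W m α) := by
      simp only [downOp, hαc]
    rw [hD, Finset.mul_sum]
    refine Finset.sum_congr rfl fun β hβ => ?_
    field_simp
  rw [lhs, ← X.exch m (fun α β => (1 / ((m : ℝ) + 1)) * (X.W (m + 1) β * (g α * h β)))]
  refine Finset.sum_congr rfl fun β hβ => ?_
  rw [Finset.mem_filter] at hβ
  have hU : upOp g β = (1 / ((m : ℝ) + 1)) * ∑ x ∈ β, g (β.erase x) := by
    simp only [upOp, hβ.2]
    push_cast
    ring
  rw [hU, show X.W (m + 1) β * ((1 / ((m : ℝ) + 1)) * ∑ x ∈ β, g (β.erase x)) * h β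
      = (∑ x ∈ β, g (β.erase x)) * ((1 / ((m : ℝ) + 1)) * (X.W (m + 1) β * h β)) from by
        ring, Finset.sum_mul]
  exact Finset.sum_congr rfl fun x _ => by ring

lemma downOp_one (m : ℕ) (hm : m ≤ d) (α : Finset V) (hα : α ∈ X.faces)
    (hc : α.card = m) : X.downOp (fun _ => 1) α = 1 := by
  have hW : 0 < X.W m α := X.W_pos m (by omega) α hα hc
  have hd : X.downOp (fun _ => 1) α = ∑ β ∈ X.faces.filter (fun β => α ⊆ β ∧ β.card = m + 1),
      X.W (m + 1) β / (((m : ℝ) + 1) * X.W m α) := by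
    simp only [downOp, hc, mul_one]
  rw [hd, ← Finset.sum_div, X.sum_ext_W m hm α]
  exact div_self (ne_of_gt (mul_pos (by positivity) hW))

lemma upOp_one (m : ℕ) (β : Finset V) (hc : β.card = m + 1) :
    upOp (fun _ => (1:ℝ)) β = 1 := by
  simp only [upOp, Finset.sum_const, nsmul_eq_mul, mul_one, hc]
  push_cast
  field_simp

lemma upOp_contract (m : ℕ) (hm : m ≤ d) (h : Finset V → ℝ) :
    X.inn (m + 1) (upOp h) (upOp h) ≤ X.inn m h h := by
  have hm1 : ((m : ℝ) + 1) ≠ 0 := by positivity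
  have key : X.inn (m + 1) (upOp h) (upOp h)
      ≤ ∑ β ∈ X.faces.filter (fun β => β.card = m + 1), ∑ x ∈ β,
          (1 / ((m : ℝ) + 1)) * (X.W (m + 1) β * h (β.erase x) ^ 2) := by
    refine Finset.sum_le_sum fun β hβ => ?_
    rw [Finset.mem_filter] at hβ
    have hU : upOp h β = (1 / ((m : ℝ) + 1)) * ∑ x ∈ β, h (β.erase x) := by
      simp only [upOp, hβ.2]; push_cast; ring
    rw [hU]
    have hS : (∑ x ∈ β, h (β.erase x)) ^ 2 ≤ ((m : ℝ) + 1) * ∑ x ∈ β, h (β.erase x) ^ 2 := by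
      have := sq_sum_le_card_mul_sum_sq (s := β) (f := fun x => h (β.erase x))
      rw [hβ.2] at this
      exact_mod_cast this
    calc X.W (m + 1) β * ((1 / ((m : ℝ) + 1)) * ∑ x ∈ β, h (β.erase x))
          * ((1 / ((m : ℝ) + 1)) * ∑ x ∈ β, h (β.erase x))
        = (X.W (m + 1) β / ((m : ℝ) + 1) ^ 2) * (∑ x ∈ β, h (β.erase x)) ^ 2 := by
          field_simp
      _ ≤ (X.W (m + 1) β / ((m : ℝ) + 1) ^ 2) * (((m : ℝ) + 1) * ∑ x ∈ β, h (β.erase x) ^ 2) := by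
          exact mul_le_mul_of_nonneg_left hS
            (div_nonneg (X.W_nonneg _ _) (by positivity))
      _ = ∑ x ∈ β, (1 / ((m : ℝ) + 1)) * (X.W (m + 1) β * h (β.erase x) ^ 2) := by
          rw [Finset.mul_sum, Finset.mul_sum]
          refine Finset.sum_congr rfl fun x _ => ?_
          field_simp
  rw [X.exch m (fun α β => (1 / ((m : ℝ) + 1)) * (X.W (m + 1) β * h α ^ 2))] at key
  refine le_trans key (le_of_eq ?_)
  refine Finset.sum_congr rfl fun α hα => ?_
  rw [Finset.sum_congr rfl (fun β _ => show (1 / ((m : ℝ) + 1)) * (X.W (m + 1) β * h α ^ 2)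
      = (h α ^ 2 / ((m : ℝ) + 1)) * X.W (m + 1) β from by ring), ← Finset.mul_sum,
    X.sum_ext_W m hm α]
  field_simp

lemma linkPi_single (α : Finset V) (x : V) (hx : x ∉ α) :
    X.linkPi α {x} = X.W (α.card + 1) (insert x α) / (((α.card : ℝ) + 1) * X.W α.card α) := by
  have h1 : α ∪ {x} = insert x α := by
    ext z; simp [Finset.mem_union, Finset.mem_insert, or_comm]
  rw [linkPi, h1, Finset.card_insert_of_notMem hx, Nat.choose_succ_self_right]
  push_cast
  ring_nf

lemma linkPi_pair (α : Finset V) (x y : V) (hx : x ∉ α) (hy : y ∉ α) (hxy : x ≠ y) :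
    X.linkPi α {x, y} = X.W (α.card + 2) (insert y (insert x α))
      / ((((α.card : ℝ) + 2) * ((α.card : ℝ) + 1) / 2) * X.W α.card α) := by
  have h1 : α ∪ {x, y} = insert y (insert x α) := by
    ext z
    simp only [Finset.mem_union, Finset.mem_insert, Finset.mem_singleton]
    tauto
  have hyx : y ∉ insert x α := by
    simp only [Finset.mem_insert]
    push_neg
    exact ⟨Ne.symm hxy, hy⟩
  have h2 : (insert y (insert x α)).card = α.card + 2 := by
    rw [Finset.card_insert_of_notMem hyx, Finset.card_insert_of_notMem hx]
  have e1 : (α.card + 2).choose α.card = (α.card + 2).choose 2 := by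
    have := Nat.choose_symm (show 2 ≤ α.card + 2 by omega)
    rw [show α.card + 2 - 2 = α.card from rfl] at this
    exact this
  have e2 : 2 * ((α.card + 2).choose 2) = (α.card + 2) * (α.card + 1) := by
    rw [Nat.choose_two_right, show α.card + 2 - 1 = α.card + 1 from rfl]
    refine Nat.mul_div_cancel' ?_
    have h := Nat.even_mul_succ_self (α.card + 1)
    rw [show (α.card + 1) * (α.card + 1 + 1) = (α.card + 2) * (α.card + 1) from by ring] at h
    exact h.two_dvd
  have h3 : (((α.card + 2).choose α.card : ℕ) : ℝ)
      = ((α.card : ℝ) + 2) * ((α.card : ℝ) + 1) / 2 := by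
    have e3 : (2 : ℝ) * (((α.card + 2).choose α.card : ℕ) : ℝ)
        = ((α.card : ℝ) + 2) * ((α.card : ℝ) + 1) := by
      rw [e1]
      exact_mod_cast e2
    linarith
  rw [linkPi, h1, h2, h3]

lemma linkPi_nonneg (α : Finset V) (hα : α ∈ X.faces) (τ : Finset V) :
    0 ≤ X.linkPi α τ := by
  have hW : 0 < X.W α.card α := X.W_pos α.card (X.dim_le α hα) α hα rfl
  exact div_nonneg (X.W_nonneg _ _)
    (mul_nonneg (Nat.cast_nonneg _) (le_of_lt hW))

lemma linkPi_single_pos (α : Finset V) (hα : α ∈ X.faces) (hc : α.card ≤ d)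
    (x : V) (hx : x ∈ X.linkVerts α) : 0 < X.linkPi α {x} := by
  simp only [linkVerts, Finset.mem_filter, Finset.mem_univ, true_and] at hx
  have hW : 0 < X.W α.card α := X.W_pos α.card (by omega) α hα rfl
  have hWx : 0 < X.W (α.card + 1) (insert x α) := by
    refine X.W_pos (α.card + 1) (by omega) _ hx.2 ?_
    rw [Finset.card_insert_of_notMem hx.1]
  rw [X.linkPi_single α x hx.1]
  positivity



lemma linkVerts_insert (α : Finset V) (x : V) :
    X.linkVerts (insert x α)
      = (X.linkVerts α).filter (fun y => y ≠ x ∧ insert y (insert x α) ∈ X.faces) := by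
  ext y
  simp only [linkVerts, Finset.mem_filter, Finset.mem_univ, true_and, Finset.mem_insert]
  constructor
  · rintro ⟨h1, h2⟩
    push_neg at h1
    exact ⟨⟨h1.2, X.down_closed _ h2 _ (Finset.insert_subset_insert y (Finset.subset_insert x α))⟩,
      h1.1, h2⟩
  · rintro ⟨⟨hy1, _⟩, hyx, hf⟩
    refine ⟨?_, hf⟩
    push_neg
    exact ⟨hyx, hy1⟩

lemma mem_linkVerts (α : Finset V) (x : V) :
    x ∈ X.linkVerts α ↔ x ∉ α ∧ insert x α ∈ X.faces := by
  simp [linkVerts]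

lemma link_row_sum (α : Finset V) (hα : α ∈ X.faces) (hd2 : α.card + 1 ≤ d)
    (x : V) (hx : x ∈ X.linkVerts α) :
    ∑ y ∈ (X.linkVerts α).filter (fun y => y ≠ x ∧ insert y (insert x α) ∈ X.faces),
      X.linkPi α {x, y} = 2 * X.linkPi α {x} := by
  rw [X.mem_linkVerts] at hx
  have hW : 0 < X.W α.card α := X.W_pos α.card (by omega) α hα rfl
  have hcx : (insert x α).card = α.card + 1 := Finset.card_insert_of_notMem hx.1
  have step1 : ∑ y ∈ (X.linkVerts α).filter
        (fun y => y ≠ x ∧ insert y (insert x α) ∈ X.faces), X.linkPi α {x, y}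
      = ∑ y ∈ X.linkVerts (insert x α),
          X.W (α.card + 2) (insert y (insert x α))
            / ((((α.card : ℝ) + 2) * ((α.card : ℝ) + 1) / 2) * X.W α.card α) := by
    rw [X.linkVerts_insert α x]
    refine Finset.sum_congr rfl fun y hy => ?_
    rw [Finset.mem_filter, X.mem_linkVerts] at hy
    exact X.linkPi_pair α x y hx.1 hy.1.1 (Ne.symm hy.2.1)
  rw [step1, ← Finset.sum_div]
  have step2 : ∑ y ∈ X.linkVerts (insert x α), X.W (α.card + 2) (insert y (insert x α))
      = ((α.card : ℝ) + 2) * X.W (α.card + 1) (insert x α) := by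
    have := X.sum_ext_W (α.card + 1) (by omega) (insert x α)
    rw [X.extend (insert x α) hx.2 (α.card + 1) hcx (fun β => X.W (α.card + 1 + 1) β)] at this
    rw [show α.card + 2 = α.card + 1 + 1 from rfl, this]
    push_cast
    ring
  rw [step2, X.linkPi_single α x hx.1]
  have h1 : (0:ℝ) < (α.card : ℝ) + 1 := by positivity
  have h2 : (0:ℝ) < (α.card : ℝ) + 2 := by positivity
  field_simp

lemma link_pi0_sum (α : Finset V) (hα : α ∈ X.faces) (hcd : α.card ≤ d) :
    ∑ x ∈ X.linkVerts α, X.linkPi α {x} = 1 := by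
  have hW : 0 < X.W α.card α := X.W_pos α.card (by omega) α hα rfl
  have step1 : ∑ x ∈ X.linkVerts α, X.linkPi α {x}
      = ∑ x ∈ X.linkVerts α,
          X.W (α.card + 1) (insert x α) / (((α.card : ℝ) + 1) * X.W α.card α) := by
    refine Finset.sum_congr rfl fun x hx => ?_
    rw [X.mem_linkVerts] at hx
    exact X.linkPi_single α x hx.1
  rw [step1, ← Finset.sum_div,
    ← X.extend α hα α.card rfl (fun β => X.W (α.card + 1) β),
    X.sum_ext_W α.card hcd α]
  exact div_self (ne_of_gt (mul_pos (by positivity) hW))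

lemma linkInner_self_nonneg (α : Finset V) (hα : α ∈ X.faces) (f : V → ℝ) :
    0 ≤ X.linkInner α f f := by
  refine Finset.sum_nonneg fun x _ => ?_
  have h1 : 0 ≤ X.linkPi α {x} := X.linkPi_nonneg α hα _
  have : X.linkPi α {x} * f x * f x = X.linkPi α {x} * (f x)^2 := by ring
  rw [this]
  positivity

end WSC

namespace WSC

variable {V : Type*} [DecidableEq V] [Fintype V] {d : ℕ} (X : WSC V d)

/-- The bilinear form of the link walk. -/
noncomputable def linkB (α : Finset V) (u v : V → ℝ) : ℝ :=
  ∑ x ∈ X.linkVerts α, ∑ y ∈ (X.linkVerts α).filter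
      (fun y => y ≠ x ∧ insert y (insert x α) ∈ X.faces),
    (X.linkPi α {x, y} / 2) * (u x * v y)

lemma linkInner_walk (α : Finset V) (hα : α ∈ X.faces) (hc : α.card ≤ d) (g h : V → ℝ) :
    X.linkInner α g (X.linkWalk α h) = X.linkB α g h := by
  unfold linkInner linkWalk linkB
  refine Finset.sum_congr rfl fun x hx => ?_
  have hpos : 0 < X.linkPi α {x} := X.linkPi_single_pos α hα hc x hx
  rw [Finset.mul_sum]
  refine Finset.sum_congr rfl fun y _ => ?_
  field_simp

lemma linkB_swap (α : Finset V) (u v : V → ℝ) :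
    X.linkB α u v = X.linkB α v u := by
  unfold linkB
  rw [Finset.sum_sigma', Finset.sum_sigma']
  refine Finset.sum_bij (fun p _ => (⟨p.2, p.1⟩ : (_ : V) × V)) ?_ ?_ ?_ ?_
  · rintro ⟨x, y⟩ hp
    simp only [Finset.mem_sigma, Finset.mem_filter] at hp ⊢
    obtain ⟨hx, hy, hyx, hf⟩ := hp
    rw [Finset.insert_comm] at hf
    exact ⟨hy, hx, Ne.symm hyx, hf⟩
  · rintro ⟨x, y⟩ h1 ⟨x', y'⟩ h2 heq
    have h3 : y = y' := congrArg (fun p => p.1) heq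
    have h4 : x = x' := congrArg (fun p => p.2) heq
    rw [h3, h4]
  · rintro ⟨x, y⟩ hp
    simp only [Finset.mem_sigma, Finset.mem_filter] at hp ⊢
    obtain ⟨hx, hy, hyx, hf⟩ := hp
    rw [Finset.insert_comm] at hf
    exact ⟨⟨y, x⟩, ⟨hy, hx, Ne.symm hyx, hf⟩, rfl⟩
  · rintro ⟨x, y⟩ _
    rw [Finset.pair_comm]
    ring

lemma linkB_const_right (α : Finset V) (hα : α ∈ X.faces) (hd2 : α.card + 1 ≤ d)
    (u : V → ℝ) (c : ℝ) :
    X.linkB α u (fun _ => c) = (∑ x ∈ X.linkVerts α, X.linkPi α {x} * u x) * c := by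
  unfold linkB
  rw [Finset.sum_mul]
  refine Finset.sum_congr rfl fun x hx => ?_
  rw [show (fun y => (X.linkPi α {x, y} / 2) * (u x * c))
      = (fun y => X.linkPi α {x, y} * (u x * c / 2)) from funext fun y => by ring,
    ← Finset.sum_mul, X.link_row_sum α hα hd2 x hx]
  ring

lemma linkB_add_left (α : Finset V) (u₁ u₂ v : V → ℝ) :
    X.linkB α (fun x => u₁ x + u₂ x) v = X.linkB α u₁ v + X.linkB α u₂ v := by
  unfold linkB
  rw [← Finset.sum_add_distrib]
  refine Finset.sum_congr rfl fun x _ => ?_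
  rw [← Finset.sum_add_distrib]
  exact Finset.sum_congr rfl fun y _ => by ring

lemma linkB_add_right (α : Finset V) (u v₁ v₂ : V → ℝ) :
    X.linkB α u (fun x => v₁ x + v₂ x) = X.linkB α u v₁ + X.linkB α u v₂ := by
  rw [X.linkB_swap α u, X.linkB_add_left, X.linkB_swap α v₁, X.linkB_swap α v₂]

lemma link_quad_le (α : Finset V) (hα : α ∈ X.faces) (hd2 : α.card + 1 ≤ d) (f : V → ℝ) :
    X.linkB α f f ≤ X.linkInner α f f := by
  unfold linkB
  have hstep : ∀ x ∈ X.linkVerts α, ∀ y ∈ (X.linkVerts α).filter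
      (fun y => y ≠ x ∧ insert y (insert x α) ∈ X.faces),
      (X.linkPi α {x, y} / 2) * (f x * f y)
        ≤ (X.linkPi α {x, y} / 2) * ((f x ^ 2 + f y ^ 2) / 2) := by
    intro x _ y _
    have hnn : 0 ≤ X.linkPi α {x, y} / 2 := by
      have := X.linkPi_nonneg α hα {x, y}
      linarith
    have hsq : f x * f y ≤ (f x ^ 2 + f y ^ 2) / 2 := by nlinarith [sq_nonneg (f x - f y)]
    exact mul_le_mul_of_nonneg_left hsq hnn
  have step2 : (∑ x ∈ X.linkVerts α, ∑ y ∈ (X.linkVerts α).filter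
        (fun y => y ≠ x ∧ insert y (insert x α) ∈ X.faces),
        (X.linkPi α {x, y} / 2) * ((f x ^ 2 + f y ^ 2) / 2))
      = X.linkB α (fun x => f x ^ 2 / 2) (fun _ => 1)
        + X.linkB α (fun _ => 1) (fun y => f y ^ 2 / 2) := by
    unfold linkB
    rw [← Finset.sum_add_distrib]
    refine Finset.sum_congr rfl fun x _ => ?_
    rw [← Finset.sum_add_distrib]
    exact Finset.sum_congr rfl fun y _ => by ring
  calc ∑ x ∈ X.linkVerts α, ∑ y ∈ (X.linkVerts α).filter
        (fun y => y ≠ x ∧ insert y (insert x α) ∈ X.faces),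
        (X.linkPi α {x, y} / 2) * (f x * f y)
      ≤ ∑ x ∈ X.linkVerts α, ∑ y ∈ (X.linkVerts α).filter
        (fun y => y ≠ x ∧ insert y (insert x α) ∈ X.faces),
        (X.linkPi α {x, y} / 2) * ((f x ^ 2 + f y ^ 2) / 2) :=
      Finset.sum_le_sum fun x hx => Finset.sum_le_sum fun y hy => hstep x hx y hy
    _ = X.linkB α (fun x => f x ^ 2 / 2) (fun _ => 1)
        + X.linkB α (fun _ => 1) (fun y => f y ^ 2 / 2) := step2
    _ = X.linkInner α f f := by
        rw [X.linkB_swap α (fun _ => 1) (fun y => f y ^ 2 / 2),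
          X.linkB_const_right α hα hd2 (fun x => f x ^ 2 / 2) 1]
        unfold linkInner
        rw [mul_one, ← Finset.sum_add_distrib]
        exact Finset.sum_congr rfl fun x _ => by ring

lemma link_rayleigh_bdd (α : Finset V) (hα : α ∈ X.faces) (hd2 : α.card + 1 ≤ d) :
    ∀ r ∈ { r : ℝ | ∃ f : V → ℝ,
      X.linkInner α f (fun _ => 1) = 0 ∧ X.linkInner α f f ≠ 0 ∧
      r = X.linkInner α f (X.linkWalk α f) / X.linkInner α f f }, r ≤ 1 := by
  rintro r ⟨f, -, hne, rfl⟩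
  have hpos : 0 < X.linkInner α f f :=
    lt_of_le_of_ne (X.linkInner_self_nonneg α hα f) (Ne.symm hne)
  rw [div_le_one hpos, X.linkInner_walk α hα (by omega) f f]
  exact X.link_quad_le α hα hd2 f

lemma linkLam2_le_one (α : Finset V) (hα : α ∈ X.faces) (hd2 : α.card + 1 ≤ d) :
    X.linkLam2 α ≤ 1 :=
  Real.sSup_le (X.link_rayleigh_bdd α hα hd2) zero_le_one

lemma gammaC_le_one (c : ℕ) (hd2 : c + 1 ≤ d) : X.gammaC c ≤ 1 := by
  refine Real.sSup_le ?_ zero_le_one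
  rintro r ⟨α, hα, hc, rfl⟩
  exact X.linkLam2_le_one α hα (by omega)

lemma linkLam2_le_gammaC (α : Finset V) (hα : α ∈ X.faces) (hd2 : α.card + 1 ≤ d) :
    X.linkLam2 α ≤ X.gammaC α.card := by
  refine le_csSup ⟨1, ?_⟩ ⟨α, hα, rfl, rfl⟩
  rintro r ⟨α', hα', hc', rfl⟩
  exact X.linkLam2_le_one α' hα' (by omega)

lemma link_decomp (α : Finset V) (hα : α ∈ X.faces) (hd2 : α.card + 1 ≤ d) (g : V → ℝ) :
    X.linkInner α g (X.linkWalk α g) ≤ X.gammaC α.card * X.linkInner α g g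
      + (1 - X.gammaC α.card) * (∑ x ∈ X.linkVerts α, X.linkPi α {x} * g x) ^ 2 := by
  have hc : α.card ≤ d := by omega
  set μ : ℝ := ∑ x ∈ X.linkVerts α, X.linkPi α {x} * g x with hμ
  set h : V → ℝ := fun x => g x - μ with hh
  have hsum1 : ∑ x ∈ X.linkVerts α, X.linkPi α {x} = 1 := X.link_pi0_sum α hα hc
  have hperp' : ∑ x ∈ X.linkVerts α, X.linkPi α {x} * h x = 0 := by
    rw [show (fun x => X.linkPi α {x} * h x)
        = (fun x => X.linkPi α {x} * g x - X.linkPi α {x} * μ) from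
        funext fun x => by simp only [hh]; ring]
    rw [Finset.sum_sub_distrib, ← Finset.sum_mul, hsum1, ← hμ]
    ring
  have hperp : X.linkInner α h (fun _ => 1) = 0 := by
    unfold linkInner
    simp only [mul_one]
    exact hperp'
  have hgg : X.linkInner α g g = X.linkInner α h h + μ ^ 2 := by
    unfold linkInner
    rw [show (fun x => X.linkPi α {x} * g x * g x)
        = (fun x => X.linkPi α {x} * h x * h x + (2 * μ) * (X.linkPi α {x} * h x)
            + μ ^ 2 * X.linkPi α {x}) from funext fun x => by simp only [hh]; ring]
    rw [Finset.sum_add_distrib, Finset.sum_add_distrib, ← Finset.mul_sum, ← Finset.mul_sum,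
      hperp', hsum1]
    ring
  have hBg : X.linkB α g g = X.linkB α h h + μ ^ 2 := by
    have hgfun : g = fun x => h x + μ := funext fun x => by simp only [hh]; ring
    have e1 : X.linkB α g g
        = X.linkB α h (fun x => h x + μ) + X.linkB α (fun _ => μ) (fun x => h x + μ) := by
      calc X.linkB α g g = X.linkB α (fun x => h x + μ) g := by rw [← hgfun]
        _ = X.linkB α h g + X.linkB α (fun _ => μ) g := X.linkB_add_left α h (fun _ => μ) g
        _ = X.linkB α h (fun x => h x + μ) + X.linkB α (fun _ => μ) (fun x => h x + μ) := by
            rw [← hgfun]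
    have e2 : X.linkB α h (fun x => h x + μ) = X.linkB α h h + X.linkB α h (fun _ => μ) :=
      X.linkB_add_right α h h (fun _ => μ)
    have e3 : X.linkB α (fun _ => μ) (fun x => h x + μ)
        = X.linkB α (fun _ => μ) h + X.linkB α (fun _ => μ) (fun _ => μ) :=
      X.linkB_add_right α (fun _ => μ) h (fun _ => μ)
    have z1 : X.linkB α h (fun _ => μ) = 0 := by
      rw [X.linkB_const_right α hα hd2 h μ, hperp', zero_mul]
    have z2 : X.linkB α (fun _ => μ) h = 0 := by
      rw [X.linkB_swap α (fun _ => μ) h, z1]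
    have z3 : X.linkB α (fun _ => μ) (fun _ => μ) = μ ^ 2 := by
      rw [X.linkB_const_right α hα hd2 (fun _ => μ) μ, ← Finset.sum_mul, hsum1]
      ring
    rw [e1, e2, e3, z1, z2, z3]
    ring
  have hMh_le : X.linkB α h h ≤ X.gammaC α.card * X.linkInner α h h := by
    by_cases h0 : X.linkInner α h h = 0
    · have hz : ∀ x ∈ X.linkVerts α, h x = 0 := by
        intro x hx
        have hnn : ∀ x ∈ X.linkVerts α, 0 ≤ X.linkPi α {x} * h x * h x := by
          intro z _
          have h1 := X.linkPi_nonneg α hα {z}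
          nlinarith [sq_nonneg (h z)]
        have hzero : X.linkPi α {x} * h x * h x = 0 := by
          have := (Finset.sum_eq_zero_iff_of_nonneg hnn).mp h0 x hx
          exact this
        have hpos := X.linkPi_single_pos α hα hc x hx
        by_contra hne
        have : 0 < X.linkPi α {x} * h x * h x := by
          rw [mul_assoc]
          exact mul_pos hpos (mul_self_pos.mpr hne)
        linarith
      have hB0 : X.linkB α h h = 0 := by
        unfold linkB
        refine Finset.sum_eq_zero fun x hx => Finset.sum_eq_zero fun y _ => ?_
        rw [hz x hx]
        ring
      rw [hB0, h0, mul_zero]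
    · have hpos : 0 < X.linkInner α h h :=
        lt_of_le_of_ne (X.linkInner_self_nonneg α hα h) (Ne.symm h0)
      have hmem : X.linkInner α h (X.linkWalk α h) / X.linkInner α h h ∈ { r : ℝ | ∃ f : V → ℝ,
          X.linkInner α f (fun _ => 1) = 0 ∧ X.linkInner α f f ≠ 0 ∧
          r = X.linkInner α f (X.linkWalk α f) / X.linkInner α f f } := ⟨h, hperp, h0, rfl⟩
      have h1 : X.linkInner α h (X.linkWalk α h) / X.linkInner α h h ≤ X.linkLam2 α :=
        le_csSup ⟨1, X.link_rayleigh_bdd α hα hd2⟩ hmem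
      have h2 := X.linkLam2_le_gammaC α hα hd2
      have hw : X.linkInner α h (X.linkWalk α h) = X.linkB α h h :=
        X.linkInner_walk α hα hc h h
      rw [hw] at h1
      calc X.linkB α h h = X.linkB α h h / X.linkInner α h h * X.linkInner α h h := by
            field_simp
        _ ≤ X.gammaC α.card * X.linkInner α h h :=
            mul_le_mul_of_nonneg_right (le_trans h1 h2) (le_of_lt hpos)
  have hhh : X.linkInner α h h = X.linkInner α g g - μ ^ 2 := by linarith [hgg]
  rw [X.linkInner_walk α hα hc g g, hBg]
  calc X.linkB α h h + μ ^ 2 ≤ X.gammaC α.card * X.linkInner α h h + μ ^ 2 := by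
        linarith [hMh_le]
    _ = X.gammaC α.card * (X.linkInner α g g - μ ^ 2) + μ ^ 2 := by rw [hhh]
    _ = X.gammaC α.card * X.linkInner α g g + (1 - X.gammaC α.card) * μ ^ 2 := by ring


lemma claim1 (c : ℕ) (g : Finset V → ℝ) :
    X.inn (c + 1) g g = ∑ α ∈ X.faces.filter (fun α => α.card = c),
      X.W c α * X.linkInner α (fun x => g (insert x α)) (fun x => g (insert x α)) := by
  have hc2 : ((c : ℝ) + 1) ≠ 0 := by positivity
  have rhs : ∀ α ∈ X.faces.filter (fun α => α.card = c),
      X.W c α * X.linkInner α (fun x => g (insert x α)) (fun x => g (insert x α))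
      = ∑ x ∈ X.linkVerts α,
          (1 / ((c : ℝ) + 1)) * (X.W (c + 1) (insert x α) * (g (insert x α) * g (insert x α))) := by
    intro α hα
    rw [Finset.mem_filter] at hα
    obtain ⟨hαf, hαc⟩ := hα
    have hW : X.W c α ≠ 0 := ne_of_gt (X.W_pos c (by
      have := X.dim_le α hαf; omega) α hαf hαc)
    unfold linkInner
    rw [Finset.mul_sum]
    refine Finset.sum_congr rfl fun x hx => ?_
    rw [X.mem_linkVerts] at hx
    rw [X.linkPi_single α x hx.1, hαc]
    field_simp
  rw [Finset.sum_congr rfl rhs]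
  have e : ∀ α ∈ X.faces.filter (fun α => α.card = c),
      ∑ x ∈ X.linkVerts α,
          (1 / ((c : ℝ) + 1)) * (X.W (c + 1) (insert x α) * (g (insert x α) * g (insert x α)))
      = ∑ β ∈ X.faces.filter (fun β => α ⊆ β ∧ β.card = c + 1),
          (1 / ((c : ℝ) + 1)) * (X.W (c + 1) β * (g β * g β)) := by
    intro α hα
    rw [Finset.mem_filter] at hα
    exact (X.extend α hα.1 c hα.2
      (fun β => (1 / ((c : ℝ) + 1)) * (X.W (c + 1) β * (g β * g β)))).symm
  rw [Finset.sum_congr rfl e,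
    ← X.exch c (fun τ β => (1 / ((c : ℝ) + 1)) * (X.W (c + 1) β * (g β * g β)))]
  unfold inn
  refine Finset.sum_congr rfl fun β hβ => ?_
  rw [Finset.mem_filter] at hβ
  rw [Finset.sum_const, hβ.2, nsmul_eq_mul]
  push_cast
  field_simp

lemma claimMu (α : Finset V) (hαf : α ∈ X.faces) (g : Finset V → ℝ) :
    X.downOp g α = ∑ x ∈ X.linkVerts α, X.linkPi α {x} * g (insert x α) := by
  have hD : X.downOp g α = ∑ β ∈ X.faces.filter (fun β => α ⊆ β ∧ β.card = α.card + 1),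
      (X.W (α.card + 1) β * g β) / (((α.card : ℝ) + 1) * X.W α.card α) := by
    simp only [downOp]
  rw [hD, X.extend α hαf α.card rfl
    (fun β => (X.W (α.card + 1) β * g β) / (((α.card : ℝ) + 1) * X.W α.card α))]
  refine Finset.sum_congr rfl fun x hx => ?_
  rw [X.mem_linkVerts] at hx
  rw [X.linkPi_single α x hx.1]
  ring

lemma sq_expand (β : Finset V) (a : V → ℝ) :
    (∑ x ∈ β, a x) * (∑ y ∈ β, a y)
      = ∑ x ∈ β, (a x * a x + a x * ∑ y ∈ β.erase x, a y) := by
  rw [Finset.sum_mul]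
  refine Finset.sum_congr rfl fun x hx => ?_
  rw [← Finset.add_sum_erase β a hx, mul_add]

lemma claim2 (c : ℕ) (hd2 : c + 1 ≤ d) (g : Finset V → ℝ) :
    X.inn (c + 2) (upOp g) (upOp g)
      = (1 / ((c : ℝ) + 2)) * X.inn (c + 1) g g
        + (((c : ℝ) + 1) / ((c : ℝ) + 2)) * ∑ α ∈ X.faces.filter (fun α => α.card = c),
            X.W c α * X.linkB α (fun x => g (insert x α)) (fun x => g (insert x α)) := by
  have hc1 : ((c : ℝ) + 1) ≠ 0 := by positivity
  have hc2 : ((c : ℝ) + 2) ≠ 0 := by positivity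
  -- Expand the left side into diagonal and off-diagonal parts
  have lhs : X.inn (c + 2) (upOp g) (upOp g)
      = (∑ β ∈ X.faces.filter (fun β => β.card = c + 2), ∑ x ∈ β,
          (1 / ((c : ℝ) + 2)) * (1 / ((c : ℝ) + 2))
            * (X.W (c + 2) β * (g (β.erase x) * g (β.erase x))))
        + ∑ β ∈ X.faces.filter (fun β => β.card = c + 2), ∑ x ∈ β,
          (1 / ((c : ℝ) + 2)) * (1 / ((c : ℝ) + 2))
            * (X.W (c + 2) β * (g (β.erase x) * ∑ y ∈ β.erase x, g (β.erase y))) := by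
    rw [← Finset.sum_add_distrib]
    unfold inn
    refine Finset.sum_congr rfl fun β hβ => ?_
    rw [Finset.mem_filter] at hβ
    have hU : upOp g β = (1 / ((c : ℝ) + 2)) * ∑ x ∈ β, g (β.erase x) := by
      simp only [upOp, hβ.2]
      push_cast
      ring
    rw [hU, show X.W (c + 2) β * ((1 / ((c : ℝ) + 2)) * ∑ x ∈ β, g (β.erase x))
          * ((1 / ((c : ℝ) + 2)) * ∑ x ∈ β, g (β.erase x))
        = (1 / ((c : ℝ) + 2)) * (1 / ((c : ℝ) + 2))
          * (X.W (c + 2) β * ((∑ x ∈ β, g (β.erase x)) * ∑ y ∈ β, g (β.erase y))) from by ring,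
      sq_expand β (fun x => g (β.erase x))]
    rw [Finset.mul_sum, Finset.mul_sum, ← Finset.sum_add_distrib]
    refine Finset.sum_congr rfl fun x _ => ?_
    ring
  -- Diagonal part
  have diag : (∑ β ∈ X.faces.filter (fun β => β.card = c + 2), ∑ x ∈ β,
        (1 / ((c : ℝ) + 2)) * (1 / ((c : ℝ) + 2))
          * (X.W (c + 2) β * (g (β.erase x) * g (β.erase x))))
      = (1 / ((c : ℝ) + 2)) * X.inn (c + 1) g g := by
    rw [show c + 2 = (c + 1) + 1 from rfl,
      X.exch (c + 1) (fun τ β => (1 / ((c : ℝ) + 2)) * (1 / ((c : ℝ) + 2))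
        * (X.W (c + 1 + 1) β * (g τ * g τ)))]
    unfold inn
    rw [Finset.mul_sum]
    refine Finset.sum_congr rfl fun τ hτ => ?_
    rw [Finset.mem_filter] at hτ
    rw [Finset.sum_congr rfl (fun β _ => show (1 / ((c : ℝ) + 2)) * (1 / ((c : ℝ) + 2))
        * (X.W (c + 1 + 1) β * (g τ * g τ))
        = ((1 / ((c : ℝ) + 2)) * (1 / ((c : ℝ) + 2)) * (g τ * g τ)) * X.W (c + 1 + 1) β
        from by ring), ← Finset.mul_sum, X.sum_ext_W (c + 1) (by omega) τ]
    push_cast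
    field_simp
    ring
  -- Off-diagonal part
  have offd : (∑ β ∈ X.faces.filter (fun β => β.card = c + 2), ∑ x ∈ β,
        (1 / ((c : ℝ) + 2)) * (1 / ((c : ℝ) + 2))
          * (X.W (c + 2) β * (g (β.erase x) * ∑ y ∈ β.erase x, g (β.erase y))))
      = (((c : ℝ) + 1) / ((c : ℝ) + 2)) * ∑ α ∈ X.faces.filter (fun α => α.card = c),
          X.W c α * X.linkB α (fun x => g (insert x α)) (fun x => g (insert x α)) := by
    rw [show c + 2 = (c + 1) + 1 from rfl,
      X.exch (c + 1) (fun τ β => (1 / ((c : ℝ) + 2)) * (1 / ((c : ℝ) + 2))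
        * (X.W (c + 1 + 1) β * (g τ * ∑ y ∈ τ, g (β.erase y))))]
    have e1 : ∀ τ ∈ X.faces.filter (fun τ => τ.card = c + 1),
        ∑ β ∈ X.faces.filter (fun β => τ ⊆ β ∧ β.card = c + 1 + 1),
          (1 / ((c : ℝ) + 2)) * (1 / ((c : ℝ) + 2))
            * (X.W (c + 1 + 1) β * (g τ * ∑ y ∈ τ, g (β.erase y)))
        = ∑ y ∈ τ, ∑ z ∈ X.linkVerts τ,
            (1 / ((c : ℝ) + 2)) * (1 / ((c : ℝ) + 2))
              * (X.W (c + 1 + 1) (insert z τ) * (g τ * g (insert z (τ.erase y)))) := by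
      intro τ hτ
      rw [Finset.mem_filter] at hτ
      rw [X.extend τ hτ.1 (c + 1) hτ.2 (fun β => (1 / ((c : ℝ) + 2)) * (1 / ((c : ℝ) + 2))
        * (X.W (c + 1 + 1) β * (g τ * ∑ y ∈ τ, g (β.erase y))))]
      have inner : ∀ z ∈ X.linkVerts τ,
          (1 / ((c : ℝ) + 2)) * (1 / ((c : ℝ) + 2))
            * (X.W (c + 1 + 1) (insert z τ) * (g τ * ∑ y ∈ τ, g ((insert z τ).erase y)))
          = ∑ y ∈ τ, (1 / ((c : ℝ) + 2)) * (1 / ((c : ℝ) + 2))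
              * (X.W (c + 1 + 1) (insert z τ) * (g τ * g (insert z (τ.erase y)))) := by
        intro z hz
        rw [X.mem_linkVerts] at hz
        rw [show (1 / ((c : ℝ) + 2)) * (1 / ((c : ℝ) + 2))
              * (X.W (c + 1 + 1) (insert z τ) * (g τ * ∑ y ∈ τ, g ((insert z τ).erase y)))
            = ((1 / ((c : ℝ) + 2)) * (1 / ((c : ℝ) + 2)) * X.W (c + 1 + 1) (insert z τ) * g τ)
              * ∑ y ∈ τ, g ((insert z τ).erase y) from by ring, Finset.mul_sum]
        refine Finset.sum_congr rfl fun y hy => ?_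
        rw [Finset.erase_insert_of_ne (fun h => hz.1 (by rw [h]; exact hy))]
        ring
      rw [Finset.sum_congr rfl inner, Finset.sum_comm]
    rw [Finset.sum_congr rfl e1,
      X.exch c (fun σ τ => ∑ z ∈ X.linkVerts τ,
        (1 / ((c : ℝ) + 2)) * (1 / ((c : ℝ) + 2))
          * (X.W (c + 1 + 1) (insert z τ) * (g τ * g (insert z σ)))), Finset.mul_sum]
    refine Finset.sum_congr rfl fun σ hσ => ?_
    rw [Finset.mem_filter] at hσ
    obtain ⟨hσf, hσc⟩ := hσ
    have hWσ : X.W c σ ≠ 0 := ne_of_gt (X.W_pos c (by omega) σ hσf hσc)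
    rw [X.extend σ hσf c hσc (fun τ => ∑ z ∈ X.linkVerts τ,
      (1 / ((c : ℝ) + 2)) * (1 / ((c : ℝ) + 2))
        * (X.W (c + 1 + 1) (insert z τ) * (g τ * g (insert z σ))))]
    unfold linkB
    rw [Finset.mul_sum, Finset.mul_sum]
    refine Finset.sum_congr rfl fun w hw => ?_
    rw [Finset.mul_sum, Finset.mul_sum, X.linkVerts_insert σ w]
    refine Finset.sum_congr rfl fun z hz => ?_
    rw [Finset.mem_filter, X.mem_linkVerts] at hz
    rw [X.mem_linkVerts] at hw
    rw [X.linkPi_pair σ w z hw.1 hz.1.1 (Ne.symm hz.2.1), hσc]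
    field_simp
  rw [lhs, diag, offd]



lemma exists_perp (m : ℕ) (hm1 : 1 ≤ m) (hm2 : m ≤ d) :
    ∃ g : Finset V → ℝ, X.inn m g (fun _ => 1) = 0 ∧ X.inn m g g ≠ 0 := by
  obtain ⟨B, hB, -, hBc⟩ := X.pure ∅ X.empty_mem
  obtain ⟨s, hsB, hsc⟩ := Finset.exists_subset_card_eq (show m ≤ B.card by omega)
  have hsf : s ∈ X.faces := X.down_closed B hB s hsB
  obtain ⟨x, hx⟩ := Finset.card_pos.mp (by omega : 0 < s.card)
  have hBs : (B \ s).Nonempty := by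
    rw [← Finset.card_pos, Finset.card_sdiff_of_subset hsB]
    omega
  obtain ⟨y, hy⟩ := hBs
  rw [Finset.mem_sdiff] at hy
  have hys : y ∉ s.erase x := fun h => hy.2 (Finset.mem_of_mem_erase h)
  have hs'c : (insert y (s.erase x)).card = m := by
    rw [Finset.card_insert_of_notMem hys, Finset.card_erase_of_mem hx, hsc]
    omega
  have hs'B : insert y (s.erase x) ⊆ B :=
    Finset.insert_subset hy.1 ((Finset.erase_subset x s).trans hsB)
  have hs'f : insert y (s.erase x) ∈ X.faces := X.down_closed B hB _ hs'B
  have hne : s ≠ insert y (s.erase x) := by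
    intro h
    exact hy.2 (h ▸ Finset.mem_insert_self y (s.erase x))
  have hWs := X.W_pos m (by omega) s hsf hsc
  have hWs' := X.W_pos m (by omega) _ hs'f hs'c
  set s' : Finset V := insert y (s.erase x)
  set g : Finset V → ℝ :=
    fun β => if β = s then X.W m s' else if β = s' then -X.W m s else 0 with hgdef
  have hsub : ({s, s'} : Finset (Finset V)) ⊆ X.faces.filter (fun α => α.card = m) := by
    intro β hβ
    rw [Finset.mem_insert, Finset.mem_singleton] at hβ
    rcases hβ with h | h
    · subst h; exact Finset.mem_filter.mpr ⟨hsf, hsc⟩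
    · subst h; exact Finset.mem_filter.mpr ⟨hs'f, hs'c⟩
  have hzero : ∀ h : Finset V → ℝ, ∀ β ∈ X.faces.filter (fun α => α.card = m),
      β ∉ ({s, s'} : Finset (Finset V)) → X.W m β * g β * h β = 0 := by
    intro h β _ hβ
    rw [Finset.mem_insert, Finset.mem_singleton] at hβ
    push_neg at hβ
    rw [hgdef]
    simp only [if_neg hβ.1, if_neg hβ.2]
    ring
  have hgs : g s = X.W m s' := by simp [hgdef]
  have hgs' : g s' = -X.W m s := by simp [hgdef, Ne.symm hne]
  refine ⟨g, ?_, ?_⟩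
  · unfold inn
    rw [← Finset.sum_subset hsub (hzero (fun _ => 1)), Finset.sum_pair hne, hgs, hgs']
    ring
  · unfold inn
    rw [← Finset.sum_subset hsub (hzero g), Finset.sum_pair hne, hgs, hgs']
    have : X.W m s * X.W m s' * X.W m s' + X.W m s' * -X.W m s * -X.W m s
        = X.W m s * X.W m s' * X.W m s' + X.W m s' * (X.W m s * X.W m s) := by ring
    rw [this]
    positivity

lemma stepP : ∀ m : ℕ, m ≤ d → ∀ f : Finset V → ℝ, X.inn m f (fun _ => 1) = 0 →
    X.inn (m + 1) (upOp f) (upOp f)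
      ≤ (1 - (1 / ((m : ℝ) + 1)) * ∏ j ∈ Finset.range m, (1 - X.gammaC j)) * X.inn m f f := by
  intro m
  induction m with
  | zero =>
    intro _ f hperp
    have hF0 : X.faces.filter (fun α => α.card = 0) = {∅} := by
      ext α
      simp only [Finset.mem_filter, Finset.mem_singleton, Finset.card_eq_zero]
      constructor
      · rintro ⟨-, h⟩; exact h
      · rintro rfl; exact ⟨X.empty_mem, rfl⟩
    have hW0 : 0 < X.W 0 ∅ := X.W_pos 0 (by omega) ∅ X.empty_mem rfl
    have hf0 : f ∅ = 0 := by
      unfold inn at hperp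
      rw [hF0, Finset.sum_singleton, mul_one] at hperp
      rcases mul_eq_zero.mp hperp with h | h
      · exact absurd h (ne_of_gt hW0)
      · exact h
    have hLHS : X.inn 1 (upOp f) (upOp f) = 0 := by
      unfold inn
      refine Finset.sum_eq_zero fun β hβ => ?_
      rw [Finset.mem_filter] at hβ
      have hU : upOp f β = 0 := by
        unfold upOp
        rw [Finset.sum_eq_zero, mul_zero]
        intro x hxβ
        have h1 : β.erase x = ∅ := by
          rw [← Finset.card_eq_zero, Finset.card_erase_of_mem hxβ, hβ.2]
        rw [h1, hf0]
      rw [hU]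
      ring
    rw [hLHS]
    norm_num
  | succ c ih =>
    intro hcd f hperp
    have hc1d : c ≤ d := by omega
    have hγ1 : X.gammaC c ≤ 1 := X.gammaC_le_one c (by omega)
    have hgperp : X.inn c (X.downOp f) (fun _ => 1) = 0 := by
      rw [X.inn_comm, X.adjoint c hc1d (fun _ => 1) f]
      rw [show X.inn (c + 1) (upOp (fun _ => (1:ℝ))) f = X.inn (c + 1) (fun _ => 1) f from
        Finset.sum_congr rfl fun β hβ => by
          rw [Finset.mem_filter] at hβ
          rw [upOp_one c β hβ.2]]
      rw [X.inn_comm]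
      exact hperp
    have hIH := ih hc1d (X.downOp f) hgperp
    have hcprev0 : 0 ≤ 1 - (1 / ((c : ℝ) + 1)) * ∏ j ∈ Finset.range c, (1 - X.gammaC j) := by
      rcases Nat.eq_zero_or_pos c with hc0 | hcpos
      · subst hc0
        norm_num
      · obtain ⟨g₀, hg₀perp, hg₀ne⟩ := X.exists_perp c hcpos hc1d
        have h1 := ih hc1d g₀ hg₀perp
        have h2 : 0 ≤ X.inn (c + 1) (upOp g₀) (upOp g₀) := X.inn_self_nonneg _ _
        have h3 : 0 < X.inn c g₀ g₀ :=
          lt_of_le_of_ne (X.inn_self_nonneg _ _) (Ne.symm hg₀ne)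
        nlinarith [h1, h2, h3]
    have hadj := X.adjoint c hc1d (X.downOp f) f
    have hDf_le : X.inn c (X.downOp f) (X.downOp f)
        ≤ (1 - (1 / ((c : ℝ) + 1)) * ∏ j ∈ Finset.range c, (1 - X.gammaC j))
            * X.inn (c + 1) f f := by
      have hCS := X.inn_sq_le (c + 1) (upOp (X.downOp f)) f
      have ht0 : 0 ≤ X.inn c (X.downOp f) (X.downOp f) := X.inn_self_nonneg _ _
      rcases eq_or_lt_of_le ht0 with h0 | hpos
      · rw [← h0]
        exact mul_nonneg hcprev0 (X.inn_self_nonneg _ _)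
      · have h4 : (X.inn c (X.downOp f) (X.downOp f)) ^ 2
            ≤ ((1 - (1 / ((c : ℝ) + 1)) * ∏ j ∈ Finset.range c, (1 - X.gammaC j))
                * X.inn c (X.downOp f) (X.downOp f)) * X.inn (c + 1) f f := by
          calc (X.inn c (X.downOp f) (X.downOp f)) ^ 2
              = (X.inn (c + 1) (upOp (X.downOp f)) f) ^ 2 := by rw [hadj]
            _ ≤ X.inn (c + 1) (upOp (X.downOp f)) (upOp (X.downOp f)) * X.inn (c + 1) f f :=
                hCS
            _ ≤ ((1 - (1 / ((c : ℝ) + 1)) * ∏ j ∈ Finset.range c, (1 - X.gammaC j))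
                  * X.inn c (X.downOp f) (X.downOp f)) * X.inn (c + 1) f f :=
                mul_le_mul_of_nonneg_right hIH (X.inn_self_nonneg _ _)
        nlinarith [h4, hpos]
    have hsum : ∑ α ∈ X.faces.filter (fun α => α.card = c),
        X.W c α * X.linkB α (fun x => f (insert x α)) (fun x => f (insert x α))
        ≤ X.gammaC c * X.inn (c + 1) f f
          + (1 - X.gammaC c) * X.inn c (X.downOp f) (X.downOp f) := by
      have hterm : ∀ α ∈ X.faces.filter (fun α => α.card = c),
          X.W c α * X.linkB α (fun x => f (insert x α)) (fun x => f (insert x α))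
          ≤ X.gammaC c
              * (X.W c α * X.linkInner α (fun x => f (insert x α)) (fun x => f (insert x α)))
            + (1 - X.gammaC c) * (X.W c α * (X.downOp f α) ^ 2) := by
        intro α hα
        rw [Finset.mem_filter] at hα
        obtain ⟨hαf, hαc⟩ := hα
        have hd2 : α.card + 1 ≤ d := by omega
        have hB := X.link_decomp α hαf hd2 (fun x => f (insert x α))
        rw [X.linkInner_walk α hαf (by omega) _ _] at hB
        have hμ : ∑ x ∈ X.linkVerts α, X.linkPi α {x} * f (insert x α) = X.downOp f α :=
          (X.claimMu α hαf f).symm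
        rw [hμ, hαc] at hB
        have hWnn := X.W_nonneg c α
        calc X.W c α * X.linkB α (fun x => f (insert x α)) (fun x => f (insert x α))
            ≤ X.W c α * (X.gammaC c
                * X.linkInner α (fun x => f (insert x α)) (fun x => f (insert x α))
                + (1 - X.gammaC c) * (X.downOp f α) ^ 2) :=
              mul_le_mul_of_nonneg_left hB hWnn
          _ = X.gammaC c
                * (X.W c α * X.linkInner α (fun x => f (insert x α)) (fun x => f (insert x α)))
              + (1 - X.gammaC c) * (X.W c α * (X.downOp f α) ^ 2) := by ring
      calc ∑ α ∈ X.faces.filter (fun α => α.card = c),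
            X.W c α * X.linkB α (fun x => f (insert x α)) (fun x => f (insert x α))
          ≤ ∑ α ∈ X.faces.filter (fun α => α.card = c),
            (X.gammaC c
                * (X.W c α * X.linkInner α (fun x => f (insert x α)) (fun x => f (insert x α)))
              + (1 - X.gammaC c) * (X.W c α * (X.downOp f α) ^ 2)) :=
            Finset.sum_le_sum hterm
        _ = X.gammaC c * X.inn (c + 1) f f
            + (1 - X.gammaC c) * X.inn c (X.downOp f) (X.downOp f) := by
            rw [Finset.sum_add_distrib, ← Finset.mul_sum, ← Finset.mul_sum, ← X.claim1 c f]
            congr 1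
            congr 1
            unfold inn
            exact Finset.sum_congr rfl fun α _ => by ring
    have hcl2 := X.claim2 c (by omega) f
    have hstep1 : X.inn (c + 1 + 1) (upOp f) (upOp f)
        ≤ (1 / ((c : ℝ) + 2)) * X.inn (c + 1) f f
          + (((c : ℝ) + 1) / ((c : ℝ) + 2))
            * (X.gammaC c * X.inn (c + 1) f f
              + (1 - X.gammaC c) * X.inn c (X.downOp f) (X.downOp f)) := by
      rw [show c + 1 + 1 = c + 2 from rfl, hcl2]
      have hcoef : (0:ℝ) ≤ ((c : ℝ) + 1) / ((c : ℝ) + 2) := by positivity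
      exact add_le_add_right (mul_le_mul_of_nonneg_left hsum hcoef) _
    have hstep2 : (1 / ((c : ℝ) + 2)) * X.inn (c + 1) f f
          + (((c : ℝ) + 1) / ((c : ℝ) + 2))
            * (X.gammaC c * X.inn (c + 1) f f
              + (1 - X.gammaC c) * X.inn c (X.downOp f) (X.downOp f))
        ≤ (1 / ((c : ℝ) + 2)) * X.inn (c + 1) f f
          + (((c : ℝ) + 1) / ((c : ℝ) + 2))
            * (X.gammaC c * X.inn (c + 1) f f
              + (1 - X.gammaC c)
                * ((1 - (1 / ((c : ℝ) + 1)) * ∏ j ∈ Finset.range c, (1 - X.gammaC j))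
                    * X.inn (c + 1) f f)) := by
      have h1γ : (0:ℝ) ≤ 1 - X.gammaC c := by linarith
      have hcoef : (0:ℝ) ≤ ((c : ℝ) + 1) / ((c : ℝ) + 2) := by positivity
      refine add_le_add_right (mul_le_mul_of_nonneg_left
        (add_le_add_right (mul_le_mul_of_nonneg_left hDf_le h1γ) _) hcoef) _
    have hfinal : (1 / ((c : ℝ) + 2)) * X.inn (c + 1) f f
          + (((c : ℝ) + 1) / ((c : ℝ) + 2))
            * (X.gammaC c * X.inn (c + 1) f f
              + (1 - X.gammaC c)
                * ((1 - (1 / ((c : ℝ) + 1)) * ∏ j ∈ Finset.range c, (1 - X.gammaC j))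
                    * X.inn (c + 1) f f))
        = (1 - (1 / (((c : ℕ) : ℝ) + 1 + 1))
            * ∏ j ∈ Finset.range (c + 1), (1 - X.gammaC j)) * X.inn (c + 1) f f := by
      rw [Finset.prod_range_succ]
      have hc1 : ((c : ℝ) + 1) ≠ 0 := by positivity
      have hc2 : ((c : ℝ) + 2) ≠ 0 := by positivity
      field_simp
      ring
    have := le_trans hstep1 (le_of_eq_of_le rfl (hstep2.trans (le_of_eq hfinal)))
    push_cast
    exact this

end WSC

/-- **Theorem (main).** Let `(X, Π)` be a weighted pure `d`-dimensional simplicial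
complex.  For every `1 ≤ k ≤ d`, the second eigenvalues of the `k`-th down-up walk
and the `(k-1)`-th up-down walk coincide and satisfy
`λ₂(P∨_k) = λ₂(P∧_{k-1}) ≤ 1 - (1/(k+1)) ∏_{j=-1}^{k-2} (1 - γ_j)`.
(Here `X.gammaC m = γ_{m-1}`, so the product over `j = -1, …, k-2` is the product
over `m ∈ range k`; `P∨_k` acts on faces of cardinality `k+1` and `P∧_{k-1}` on
faces of cardinality `k`.) -/
theorem lam2_downUp_le {V : Type*} [DecidableEq V] [Fintype V] {d : ℕ}
    (X : WSC V d) (k : ℕ) (hk1 : 1 ≤ k) (hkd : k ≤ d) :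
    X.lam2 (k + 1) X.downUp = X.lam2 k X.upDown ∧
    X.lam2 (k + 1) X.downUp ≤
      1 - (1 / ((k : ℝ) + 1)) * ∏ m ∈ Finset.range k, (1 - X.gammaC m) := by
  -- basic adjunction rewrites
  have hF2 : ∀ f : Finset V → ℝ,
      X.inn k f (X.upDown f) = X.inn (k + 1) (WSC.upOp f) (WSC.upOp f) := fun f =>
    X.adjoint k hkd f (WSC.upOp f)
  have hF1 : ∀ f : Finset V → ℝ,
      X.inn (k + 1) f (X.downUp f) = X.inn k (X.downOp f) (X.downOp f) := by
    intro f
    have h := X.adjoint k hkd (X.downOp f) f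
    rw [X.inn_comm (k + 1) f (X.downUp f)]
    exact h.symm
  -- upper bound on the elements of the up-down Rayleigh set
  have hUb : ∀ r ∈ { r : ℝ | ∃ f : Finset V → ℝ,
      X.inn k f (fun _ => 1) = 0 ∧ X.inn k f f ≠ 0 ∧
      r = X.inn k f (X.upDown f) / X.inn k f f },
      r ≤ 1 - (1 / ((k : ℝ) + 1)) * ∏ m ∈ Finset.range k, (1 - X.gammaC m) := by
    rintro r ⟨f, hperp, hne, rfl⟩
    have hpos : 0 < X.inn k f f :=
      lt_of_le_of_ne (X.inn_self_nonneg _ _) (Ne.symm hne)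
    rw [div_le_iff₀ hpos, hF2 f]
    exact X.stepP k hkd f hperp
  -- nonnegativity of the bound
  have hck0 : 0 ≤ 1 - (1 / ((k : ℝ) + 1)) * ∏ m ∈ Finset.range k, (1 - X.gammaC m) := by
    obtain ⟨g₀, hg₀perp, hg₀ne⟩ := X.exists_perp k hk1 hkd
    have h1 := X.stepP k hkd g₀ hg₀perp
    have h2 : 0 ≤ X.inn (k + 1) (WSC.upOp g₀) (WSC.upOp g₀) := X.inn_self_nonneg _ _
    have h3 : 0 < X.inn k g₀ g₀ :=
      lt_of_le_of_ne (X.inn_self_nonneg _ _) (Ne.symm hg₀ne)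
    nlinarith [h1, h2, h3]
  have hle2 : X.lam2 k X.upDown
      ≤ 1 - (1 / ((k : ℝ) + 1)) * ∏ m ∈ Finset.range k, (1 - X.gammaC m) :=
    Real.sSup_le hUb hck0
  -- nonnegativity of all Rayleigh quotients
  have hnnA : ∀ r ∈ { r : ℝ | ∃ f : Finset V → ℝ,
      X.inn k f (fun _ => 1) = 0 ∧ X.inn k f f ≠ 0 ∧
      r = X.inn k f (X.upDown f) / X.inn k f f }, 0 ≤ r := by
    rintro r ⟨f, hperp, hne, rfl⟩
    exact div_nonneg (by rw [hF2 f]; exact X.inn_self_nonneg _ _) (X.inn_self_nonneg _ _)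
  have hnnV : ∀ r ∈ { r : ℝ | ∃ f : Finset V → ℝ,
      X.inn (k + 1) f (fun _ => 1) = 0 ∧ X.inn (k + 1) f f ≠ 0 ∧
      r = X.inn (k + 1) f (X.downUp f) / X.inn (k + 1) f f }, 0 ≤ r := by
    rintro r ⟨f, hperp, hne, rfl⟩
    exact div_nonneg (by rw [hF1 f]; exact X.inn_self_nonneg _ _) (X.inn_self_nonneg _ _)
  have hbddA : BddAbove { r : ℝ | ∃ f : Finset V → ℝ,
      X.inn k f (fun _ => 1) = 0 ∧ X.inn k f f ≠ 0 ∧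
      r = X.inn k f (X.upDown f) / X.inn k f f } :=
    ⟨1 - (1 / ((k : ℝ) + 1)) * ∏ m ∈ Finset.range k, (1 - X.gammaC m), hUb⟩
  have hbddV : BddAbove { r : ℝ | ∃ f : Finset V → ℝ,
      X.inn (k + 1) f (fun _ => 1) = 0 ∧ X.inn (k + 1) f f ≠ 0 ∧
      r = X.inn (k + 1) f (X.downUp f) / X.inn (k + 1) f f } := by
    refine ⟨1, ?_⟩
    rintro r ⟨f, hperp, hne, rfl⟩
    have hposF : 0 < X.inn (k + 1) f f :=
      lt_of_le_of_ne (X.inn_self_nonneg _ _) (Ne.symm hne)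
    have ht0 : 0 ≤ X.inn k (X.downOp f) (X.downOp f) := X.inn_self_nonneg _ _
    have hadj := X.adjoint k hkd (X.downOp f) f
    have hCS := X.inn_sq_le (k + 1) (WSC.upOp (X.downOp f)) f
    have hU := X.upOp_contract k hkd (X.downOp f)
    have ht : X.inn k (X.downOp f) (X.downOp f) ≤ X.inn (k + 1) f f := by
      rcases eq_or_lt_of_le ht0 with h0 | hpos
      · rw [← h0]; exact le_of_lt hposF
      · nlinarith [hadj, hCS, hU, hpos]
    rw [hF1 f, div_le_one hposF]
    exact ht
  -- the perpendicularity transfers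
  have hDperp : ∀ f : Finset V → ℝ, X.inn (k + 1) f (fun _ => 1) = 0 →
      X.inn k (X.downOp f) (fun _ => 1) = 0 := by
    intro f hperp
    rw [X.inn_comm, X.adjoint k hkd (fun _ => 1) f]
    rw [show X.inn (k + 1) (WSC.upOp (fun _ => (1:ℝ))) f = X.inn (k + 1) (fun _ => 1) f from
      Finset.sum_congr rfl fun β hβ => by
        rw [Finset.mem_filter] at hβ
        rw [WSC.upOp_one k β hβ.2]]
    rw [X.inn_comm]
    exact hperp
  have hUperp : ∀ f : Finset V → ℝ, X.inn k f (fun _ => 1) = 0 →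
      X.inn (k + 1) (WSC.upOp f) (fun _ => 1) = 0 := by
    intro f hperp
    have e := X.adjoint k hkd f (fun _ => 1)
    rw [← e]
    rw [show X.inn k f (X.downOp (fun _ => (1:ℝ))) = X.inn k f (fun _ => 1) from
      Finset.sum_congr rfl fun α hα => by
        rw [Finset.mem_filter] at hα
        rw [X.downOp_one k hkd α hα.1 hα.2]]
    exact hperp
  -- sSup S∨ ≤ sSup S∧
  have hVA : X.lam2 (k + 1) X.downUp ≤ X.lam2 k X.upDown := by
    refine Real.sSup_le ?_ (Real.sSup_nonneg hnnA)
    rintro r ⟨f, hperp, hne, rfl⟩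
    have hposF : 0 < X.inn (k + 1) f f :=
      lt_of_le_of_ne (X.inn_self_nonneg _ _) (Ne.symm hne)
    have ht0 : 0 ≤ X.inn k (X.downOp f) (X.downOp f) := X.inn_self_nonneg _ _
    rcases eq_or_lt_of_le ht0 with h0 | hpos
    · have hr0 : X.inn (k + 1) f (X.downUp f) / X.inn (k + 1) f f = 0 := by
        rw [hF1 f, ← h0, zero_div]
      rw [hr0]
      exact Real.sSup_nonneg hnnA
    · have hmem : X.inn k (X.downOp f) (X.upDown (X.downOp f)) / X.inn k (X.downOp f) (X.downOp f)
          ∈ { r : ℝ | ∃ f : Finset V → ℝ,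
            X.inn k f (fun _ => 1) = 0 ∧ X.inn k f f ≠ 0 ∧
            r = X.inn k f (X.upDown f) / X.inn k f f } :=
        ⟨X.downOp f, hDperp f hperp, ne_of_gt hpos, rfl⟩
    -- r = t/F ≤ ‖U Df‖² / t = r'
      have hadj := X.adjoint k hkd (X.downOp f) f
      have hCS := X.inn_sq_le (k + 1) (WSC.upOp (X.downOp f)) f
      have key : X.inn k (X.downOp f) (X.downOp f) * X.inn k (X.downOp f) (X.downOp f)
          ≤ X.inn (k + 1) (WSC.upOp (X.downOp f)) (WSC.upOp (X.downOp f)) * X.inn (k + 1) f f := by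
        nlinarith [hadj, hCS]
      have hr : X.inn (k + 1) f (X.downUp f) / X.inn (k + 1) f f
          ≤ X.inn k (X.downOp f) (X.upDown (X.downOp f)) / X.inn k (X.downOp f) (X.downOp f) := by
        rw [hF1 f, hF2 (X.downOp f), div_le_div_iff₀ hposF hpos]
        exact key
      exact le_trans hr (le_csSup hbddA hmem)
  -- sSup S∧ ≤ sSup S∨
  have hAV : X.lam2 k X.upDown ≤ X.lam2 (k + 1) X.downUp := by
    refine Real.sSup_le ?_ (Real.sSup_nonneg hnnV)
    rintro r ⟨f, hperp, hne, rfl⟩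
    have hposF : 0 < X.inn k f f :=
      lt_of_le_of_ne (X.inn_self_nonneg _ _) (Ne.symm hne)
    have ht0 : 0 ≤ X.inn (k + 1) (WSC.upOp f) (WSC.upOp f) := X.inn_self_nonneg _ _
    rcases eq_or_lt_of_le ht0 with h0 | hpos
    · have hr0 : X.inn k f (X.upDown f) / X.inn k f f = 0 := by
        rw [hF2 f, ← h0, zero_div]
      rw [hr0]
      exact Real.sSup_nonneg hnnV
    · have hmem : X.inn (k + 1) (WSC.upOp f) (X.downUp (WSC.upOp f))
            / X.inn (k + 1) (WSC.upOp f) (WSC.upOp f)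
          ∈ { r : ℝ | ∃ f : Finset V → ℝ,
            X.inn (k + 1) f (fun _ => 1) = 0 ∧ X.inn (k + 1) f f ≠ 0 ∧
            r = X.inn (k + 1) f (X.downUp f) / X.inn (k + 1) f f } :=
        ⟨WSC.upOp f, hUperp f hperp, ne_of_gt hpos, rfl⟩
      have hadj := X.adjoint k hkd f (WSC.upOp f)
      have hCS := X.inn_sq_le k f (X.downOp (WSC.upOp f))
      have key : X.inn (k + 1) (WSC.upOp f) (WSC.upOp f)
            * X.inn (k + 1) (WSC.upOp f) (WSC.upOp f)
          ≤ X.inn k (X.downOp (WSC.upOp f)) (X.downOp (WSC.upOp f)) * X.inn k f f := by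
        nlinarith [hadj, hCS]
      have hr : X.inn k f (X.upDown f) / X.inn k f f
          ≤ X.inn (k + 1) (WSC.upOp f) (X.downUp (WSC.upOp f))
              / X.inn (k + 1) (WSC.upOp f) (WSC.upOp f) := by
        rw [hF2 f, hF1 (WSC.upOp f), div_le_div_iff₀ hposF hpos]
        exact key
      exact le_trans hr (le_csSup hbddV hmem)
  have heq : X.lam2 (k + 1) X.downUp = X.lam2 k X.upDown := le_antisymm hVA hAV
  exact ⟨heq, by rw [heq]; exact hle2⟩
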